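/- arXiv:2405.06852 — 8 statements merged into one kernel-verified Lean document; each statement's English description precedes it below -/
import Mathlib

section
/- Given any Boolean algebra B, let B₊ = B \ {0} with the induced order ≤₊. Then the map φ(b) = {b' ∈ B₊ : b' ≤ b} is a Boolean algebra embedding of B into the complete Boolean algebra RO(B₊, ≤₊) of regular open sets of the poset (B₊, ≤₊), and this embedding preserves all existing joins: if ⋁{aᵢ : i ∈ I} exists in B, then φ(⋁ aᵢ) is the join of {φ(aᵢ)} in RO(B₊, ≤₊). -/
/-- A set `U` in a poset is *regular open* if
`U = {x | ∀ x' ≤ x, ∃ x'' ≤ x', x'' ∈ U}`. -/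
def IsRO {S : Type*} [PartialOrder S] (U : Set S) : Prop :=
  U = {x : S | ∀ x' ≤ x, ∃ x'' ≤ x', x'' ∈ U}

/-- Negation in the regular open algebra of a poset. -/
def roNeg {S : Type*} [PartialOrder S] (U : Set S) : Set S :=
  {x : S | ∀ x' ≤ x, x' ∉ U}

/-- Join in the regular open algebra of a poset. -/
def roSup {S : Type*} [PartialOrder S] (𝒰 : Set (Set S)) : Set S :=
  {x : S | ∀ x' ≤ x, ∃ x'' ≤ x', x'' ∈ ⋃₀ 𝒰}

private lemma bot_of_le_le {B : Type*} [BooleanAlgebra B] {y a : B}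
    (h1 : y ≤ a) (h2 : y ≤ aᶜ) : y = ⊥ :=
  le_bot_iff.mp (by simpa using le_inf h1 h2)

/-- For any Boolean algebra `B`, the map `φ b = {b' ∈ B₊ | b' ≤ b}` is a Boolean
embedding of `B` into the regular open algebra of the poset `B₊` of nonzero
elements, preserving all existing joins. -/
theorem embedding_into_regular_opens_of_nonzero_elements {B : Type*} [BooleanAlgebra B] :
    let Bp := {b : B // b ≠ ⊥}
    let φ : B → Set Bp := fun b => {b' : Bp | (b' : B) ≤ b}
    (∀ b : B, IsRO (φ b)) ∧
    Function.Injective φ ∧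
    (∀ a b : B, φ (a ⊓ b) = φ a ∩ φ b) ∧
    (∀ a : B, φ aᶜ = roNeg (φ a)) ∧
    φ ⊥ = ∅ ∧ φ ⊤ = Set.univ ∧
    (∀ (A : Set B) (a : B), IsLUB A a → φ a = roSup (φ '' A)) := by
  intro Bp φ
  -- key: if something is ≤ b for a dense set of nonzero elements below x, then x ≤ b
  have dense_le : ∀ (x : Bp) (b : B),
      (∀ x' : Bp, x' ≤ x → ∃ x'' : Bp, x'' ≤ x' ∧ (x'' : B) ≤ b) → (x : B) ≤ b := by
    intro x b h
    have hbot : (x : B) ⊓ bᶜ = ⊥ := by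
      by_contra hne
      obtain ⟨x'', hle, hb⟩ := h ⟨(x : B) ⊓ bᶜ, hne⟩ (by exact inf_le_left)
      have hc : (x'' : B) ≤ bᶜ := le_trans hle inf_le_right
      exact x''.2 (bot_of_le_le hb hc)
    have : (x : B) \ b = ⊥ := by rwa [sdiff_eq]
    exact sdiff_eq_bot_iff.mp this
  refine ⟨?_, ?_, ?_, ?_, ?_, ?_, ?_⟩
  · -- IsRO
    intro b
    unfold IsRO
    ext x
    simp only [Set.mem_setOf_eq]
    constructor
    · intro hx x' hx'
      exact ⟨x', le_refl _, le_trans hx' hx⟩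
    · intro h
      exact dense_le x b h
  · -- Injective
    have aux : ∀ a b : B, φ a ⊆ φ b → a ≤ b := by
      intro a b hsub
      have : a ⊓ bᶜ = ⊥ := by
        by_contra hne
        have h1 : (⟨a ⊓ bᶜ, hne⟩ : Bp) ∈ φ a := inf_le_left
        have h2 : (⟨a ⊓ bᶜ, hne⟩ : Bp) ∈ φ b := hsub h1
        exact hne (bot_of_le_le h2 inf_le_right)
      have : a \ b = ⊥ := by rwa [sdiff_eq]
      exact sdiff_eq_bot_iff.mp this
    intro a b hab
    exact le_antisymm (aux a b hab.le) (aux b a hab.ge)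
  · -- inf
    intro a b
    ext x
    simp only [φ, Set.mem_setOf_eq, Set.mem_inter_iff, le_inf_iff]
  · -- compl
    intro a
    ext x
    simp only [φ, roNeg, Set.mem_setOf_eq]
    constructor
    · intro hx x' hx' hmem
      exact x'.2 (bot_of_le_le hmem (le_trans hx' hx))
    · intro h
      have : (x : B) ⊓ a = ⊥ := by
        by_contra hne
        exact h ⟨(x : B) ⊓ a, hne⟩ inf_le_left inf_le_right
      have : (x : B) \ aᶜ = ⊥ := by rw [sdiff_eq, compl_compl]; exact this
      exact sdiff_eq_bot_iff.mp this
  · -- bot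
    ext x
    simp only [φ, Set.mem_setOf_eq, le_bot_iff, Set.mem_empty_iff_false, iff_false]
    exact x.2
  · -- top
    ext x
    simp [φ]
  · -- sup
    intro A a hlub
    ext x
    simp only [φ, roSup, Set.mem_setOf_eq]
    constructor
    · intro hx x' hx'
      by_contra hcon
      push_neg at hcon
      have hub : (x' : B)ᶜ ∈ upperBounds A := by
        intro c hc
        have hbot : (x' : B) ⊓ c = ⊥ := by
          by_contra hne
          refine hcon ⟨(x' : B) ⊓ c, hne⟩ inf_le_left ?_
          exact ⟨φ c, ⟨c, hc, rfl⟩, inf_le_right⟩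
        have : (x' : B) \ cᶜ = ⊥ := by
          rw [sdiff_eq, compl_compl]; exact hbot
        have h1 : (x' : B) ≤ cᶜ := sdiff_eq_bot_iff.mp this
        -- we need c ≤ x'ᶜ
        exact le_compl_iff_le_compl.mp h1
      have ha : a ≤ (x' : B)ᶜ := hlub.2 hub
      have : (x' : B) ≤ (x' : B)ᶜ := le_trans hx' (le_trans hx ha)
      exact x'.2 (bot_of_le_le (le_refl _) this)
    · intro h
      apply dense_le x a
      intro x' hx'
      obtain ⟨x'', hle, _, ⟨c, hc, rfl⟩, hmem⟩ := h x' hx'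
      exact ⟨x'', hle, le_trans hmem (hlub.1 hc)⟩
end

section
/- If B is a complete Boolean algebra, then B is isomorphic to the regular open algebra RO(B₊, ≤₊) of the poset of its nonzero elements, via the map b ↦ {b' ∈ B₊ : b' ≤ b}. -/
section Aux

variable {B : Type*} [CompleteBooleanAlgebra B]

lemma RO_downward {U : Set {b : B // b ≠ ⊥}} (hU : IsRO U) {x y : {b : B // b ≠ ⊥}}
    (hy : y ∈ U) (hxy : x ≤ y) : x ∈ U := by
  rw [hU] at hy ⊢
  intro x' hx'
  exact hy x' (hx'.trans hxy)

lemma isRO_below (b : B) : IsRO {b' : {b : B // b ≠ ⊥} | (b' : B) ≤ b} := by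
  unfold IsRO
  ext x
  simp only [Set.mem_setOf_eq]
  constructor
  · intro hx x' hx'
    exact ⟨x', le_refl _, le_trans hx' hx⟩
  · intro h
    by_contra hxb
    have hne : (x : B) ⊓ bᶜ ≠ ⊥ := by
      intro h0
      apply hxb
      have hsd : (x : B) \ b = ⊥ := by rwa [sdiff_eq]
      exact sdiff_eq_bot_iff.mp hsd
    obtain ⟨x'', hle, hmem⟩ := h ⟨(x : B) ⊓ bᶜ, hne⟩ (by exact inf_le_left)
    have hle' : (x'' : B) ≤ (x : B) ⊓ bᶜ := hle
    have h1 : (x'' : B) ≤ bᶜ := le_trans hle' inf_le_right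
    have h2 : (x'' : B) ≤ b ⊓ bᶜ := le_inf hmem h1
    rw [inf_compl_eq_bot] at h2
    exact x''.2 (le_bot_iff.mp h2)

lemma left_inv_aux (b : B) : sSup ((↑) '' {b' : {b : B // b ≠ ⊥} | (b' : B) ≤ b}) = b := by
  apply le_antisymm
  · exact sSup_le (by rintro x ⟨y, hy, rfl⟩; exact hy)
  · rcases eq_or_ne b ⊥ with rfl | hb
    · exact bot_le
    · exact le_sSup ⟨⟨b, hb⟩, le_refl b, rfl⟩

lemma right_inv_aux (U : Set {b : B // b ≠ ⊥}) (hU : IsRO U) :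
    {b' : {b : B // b ≠ ⊥} | (b' : B) ≤ sSup ((↑) '' U)} = U := by
  ext x
  simp only [Set.mem_setOf_eq]
  constructor
  · intro hx
    rw [hU]
    intro x' hx'
    by_contra hc
    push_neg at hc
    have hinf : ∀ u ∈ U, (x' : B) ⊓ (u : B) = ⊥ := by
      intro u hu
      by_contra h0
      exact hc ⟨(x' : B) ⊓ (u : B), h0⟩ inf_le_left (RO_downward hU hu inf_le_right)
    have h1 : (x' : B) ≤ sSup ((↑) '' U) := le_trans hx' hx
    have h2 : (x' : B) = (x' : B) ⊓ sSup ((↑) '' U) := (inf_eq_left.mpr h1).symm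
    apply x'.2
    rw [h2, inf_sSup_eq]
    apply le_bot_iff.mp
    apply iSup₂_le
    rintro b ⟨u, hu, rfl⟩
    rw [hinf u hu]
  · intro hx
    exact le_sSup ⟨x, hx, rfl⟩

end Aux

/-- A complete Boolean algebra `B` is isomorphic to the regular open algebra of
the poset `B₊` of its nonzero elements, via `b ↦ {b' ∈ B₊ | b' ≤ b}`. -/
theorem complete_boolean_algebra_iso_regular_opens {B : Type*} [CompleteBooleanAlgebra B] :
    ∃ e : B ≃o {U : Set {b : B // b ≠ ⊥} // IsRO U},
      ∀ b : B, ((e b : {U : Set {b : B // b ≠ ⊥} // IsRO U}) : Set {b : B // b ≠ ⊥}) =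
        {b' : {b : B // b ≠ ⊥} | (b' : B) ≤ b} := by
  refine ⟨{ toFun := fun b => ⟨{b' : {b : B // b ≠ ⊥} | (b' : B) ≤ b}, isRO_below b⟩
            invFun := fun U => sSup ((↑) '' U.val)
            left_inv := fun b => left_inv_aux b
            right_inv := fun U => Subtype.ext (right_inv_aux U.1 U.2)
            map_rel_iff' := ?_ }, fun b => rfl⟩
  intro a b
  constructor
  · intro h
    rcases eq_or_ne (a ⊓ bᶜ) ⊥ with h0 | h0
    · have hsd : a \ b = ⊥ := by rwa [sdiff_eq]
      exact sdiff_eq_bot_iff.mp hsd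
    · have hmem : (⟨a ⊓ bᶜ, h0⟩ : {b : B // b ≠ ⊥}) ∈
          {b' : {b : B // b ≠ ⊥} | (b' : B) ≤ a} := inf_le_left
      have hb : (⟨a ⊓ bᶜ, h0⟩ : {b : B // b ≠ ⊥}) ∈
          {b' : {b : B // b ≠ ⊥} | (b' : B) ≤ b} := h hmem
      have h1 : a ⊓ bᶜ ≤ b ⊓ bᶜ := le_inf hb inf_le_right
      rw [inf_compl_eq_bot] at h1
      exact absurd (le_bot_iff.mp h1) h0
  · intro h x hx
    exact le_trans hx h
end

section
/- If (S,⊑) is a separative poset and U is a regular open subset of (S,⊑), then the restriction of (S,⊑) to U is again a separative poset. -/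
/-- The restriction of a separative poset to a regular open subset is again a
separative poset (with the induced order). -/
theorem restriction_of_separative_to_regular_open_is_separative
    {S : Type*} [PartialOrder S]
    (hsep : ∀ x : S, IsRO {y : S | y ≤ x})
    (U : Set S) (hU : IsRO U) :
    ∀ x : U, IsRO {y : U | y ≤ x} := by
  intro x
  unfold IsRO
  ext z
  simp only [Set.mem_setOf_eq]
  constructor
  · intro hz z' hz'
    exact ⟨z', le_refl z', hz'.trans hz⟩
  · intro h
    have hx := hsep (x : S)
    have hz : (z : S) ∈ {y : S | y ≤ (x : S)} := by
      rw [hx]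
      intro s' hs'
      have hzU := (Set.ext_iff.mp hU (z : S)).mp z.2
      obtain ⟨u, hu, huU⟩ := hzU s' hs'
      obtain ⟨w, hw, hwx⟩ := h ⟨u, huU⟩ (show (⟨u, huU⟩ : U) ≤ z from hu.trans hs')
      exact ⟨(w : S), le_trans hw hu, hwx⟩
    exact hz
end

section
/- Let F = (S,⊑,P) be a possibility frame satisfying the filter realization condition. Then P is compact in the following sense: for any family {Uᵢ : i ∈ I} ⊆ P with S = ⋁{Uᵢ : i ∈ I} (join in the regular open algebra), there is a finite I₀ ⊆ I with S = ⋁{Uᵢ : i ∈ I₀}. -/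
/-- In a possibility frame `(S,⊑,P)` satisfying the filter realization
condition, `P` is compact: a cover of `S` by a join of admissible sets has a
finite subcover (join). -/
theorem filter_realization_implies_compactness {S : Type*} [PartialOrder S]
    (P : Set (Set S)) (hne : P.Nonempty)
    (hro : ∀ U ∈ P, IsRO U)
    (hneg : ∀ U ∈ P, roNeg U ∈ P)
    (hinter : ∀ U ∈ P, ∀ V ∈ P, U ∩ V ∈ P)
    (hfr : ∀ F ⊆ P, F.Nonempty →
      (∀ U ∈ F, ∀ V ∈ F, U ∩ V ∈ F) →
      (∀ U ∈ F, ∀ V ∈ P, U ⊆ V → V ∈ F) →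
      ∅ ∉ F → ∃ x : S, F = {U ∈ P | x ∈ U})
    {I : Type*} (U : I → Set S) (hU : ∀ i, U i ∈ P)
    (hcov : roSup (Set.range U) = Set.univ) :
    ∃ t : Finset I, roSup (U '' ↑t) = Set.univ := by
  classical
  by_contra hcon
  push_neg at hcon
  -- every finite intersection of the negations is nonempty
  have hinterne : ∀ t : Finset I, (⋂ i ∈ t, roNeg (U i)).Nonempty := by
    intro t
    rw [Set.nonempty_iff_ne_empty]
    intro hemp
    apply hcon t
    ext x
    simp only [roSup, Set.mem_setOf_eq, Set.mem_univ, iff_true]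
    intro x' hx'
    have hx'' : x' ∉ (⋂ i ∈ t, roNeg (U i)) := by
      rw [hemp]; exact Set.notMem_empty x'
    simp only [Set.mem_iInter, not_forall] at hx''
    obtain ⟨i, hit, hni⟩ := hx''
    simp only [roNeg, Set.mem_setOf_eq] at hni
    push_neg at hni
    obtain ⟨x'', hle, hmem⟩ := hni
    exact ⟨x'', hle, Set.mem_sUnion.2 ⟨U i, ⟨i, hit, rfl⟩, hmem⟩⟩
  -- univ ∈ P
  obtain ⟨U0, hU0⟩ := hne
  have hempP : (∅ : Set S) ∈ P := by
    have h := hinter U0 hU0 (roNeg U0) (hneg U0 hU0)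
    have heq : U0 ∩ roNeg U0 = (∅ : Set S) := by
      ext x
      simp only [Set.mem_inter_iff, Set.mem_empty_iff_false, iff_false, not_and]
      intro h1 h2
      exact h2 x le_rfl h1
    rwa [heq] at h
  have hunivP : (Set.univ : Set S) ∈ P := by
    have h := hneg ∅ hempP
    have heq : roNeg (∅ : Set S) = Set.univ := by
      ext x; simp [roNeg]
    rwa [heq] at h
  -- the filter generated by the negations
  set F : Set (Set S) := {V ∈ P | ∃ t : Finset I, (⋂ i ∈ t, roNeg (U i)) ⊆ V} with hF
  have hFsub : F ⊆ P := fun V hV => hV.1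
  have hFne : F.Nonempty := ⟨Set.univ, hunivP, ⟨∅, Set.subset_univ _⟩⟩
  have hFint : ∀ V ∈ F, ∀ W ∈ F, V ∩ W ∈ F := by
    rintro V ⟨hVP, t1, ht1⟩ W ⟨hWP, t2, ht2⟩
    refine ⟨hinter V hVP W hWP, t1 ∪ t2, ?_⟩
    intro x hx
    simp only [Set.mem_iInter] at hx
    exact ⟨ht1 (Set.mem_iInter₂.2 fun i hi => hx i (Finset.mem_union_left _ hi)),
           ht2 (Set.mem_iInter₂.2 fun i hi => hx i (Finset.mem_union_right _ hi))⟩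
  have hFup : ∀ V ∈ F, ∀ W ∈ P, V ⊆ W → W ∈ F := by
    rintro V ⟨hVP, t, ht⟩ W hWP hVW
    exact ⟨hWP, t, ht.trans hVW⟩
  have hFprop : (∅ : Set S) ∉ F := by
    rintro ⟨-, t, ht⟩
    obtain ⟨x, hx⟩ := hinterne t
    exact (ht hx)
  obtain ⟨x, hx⟩ := hfr F hFsub hFne hFint hFup hFprop
  -- x is in every roNeg (U i)
  have hxneg : ∀ i, x ∈ roNeg (U i) := by
    intro i
    have hmem : roNeg (U i) ∈ F := by
      refine ⟨hneg _ (hU i), {i}, ?_⟩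
      intro y hy
      simpa using Set.mem_iInter₂.1 hy i (Finset.mem_singleton_self i)
    rw [hx] at hmem
    exact hmem.2
  -- but x is covered
  have hxcov : x ∈ roSup (Set.range U) := by rw [hcov]; trivial
  obtain ⟨x'', hle, hmem⟩ := hxcov x le_rfl
  obtain ⟨V, ⟨i, rfl⟩, hV⟩ := Set.mem_sUnion.1 hmem
  exact hxneg i x'' hle hV
end

section
/- If a possibility frame F = (S,⊑,P) satisfies the separation condition (for all x,y ∈ S, if y ⋢ x then there is U ∈ P with x ∈ U and y ∉ U), then the underlying poset (S,⊑) is separative. -/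
/-- If a possibility frame `(S,⊑,P)` satisfies the separation condition, then
the underlying poset is separative: `y ⋢ x` implies there is `z ⊑ y` with
`↓z ∩ ↓x = ∅`. -/
theorem separation_implies_separative {S : Type*} [PartialOrder S]
    (P : Set (Set S)) (hne : P.Nonempty)
    (hro : ∀ U ∈ P, IsRO U)
    (hneg : ∀ U ∈ P, roNeg U ∈ P)
    (hinter : ∀ U ∈ P, ∀ V ∈ P, U ∩ V ∈ P)
    (hsepn : ∀ x y : S, ¬ y ≤ x → ∃ U ∈ P, x ∈ U ∧ y ∉ U) :
    ∀ x y : S, ¬ y ≤ x → ∃ z ≤ y, {w : S | w ≤ z} ∩ {w : S | w ≤ x} = ∅ := by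
  intro x y hyx
  obtain ⟨U, hUP, hxU, hyU⟩ := hsepn x y hyx
  have hRO := hro U hUP
  have hy : y ∉ {x : S | ∀ x' ≤ x, ∃ x'' ≤ x', x'' ∈ U} := by rw [← hRO]; exact hyU
  simp only [Set.mem_setOf_eq, not_forall] at hy
  obtain ⟨z, hzy, hz⟩ := hy
  push_neg at hz
  refine ⟨z, hzy, ?_⟩
  ext w
  simp only [Set.mem_inter_iff, Set.mem_setOf_eq, Set.mem_empty_iff_false, iff_false, not_and]
  intro hwz hwx
  have := hRO ▸ hxU
  obtain ⟨u, huw, huU⟩ := this w hwx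
  exact hz u (le_trans huw hwz) huU
end

section
/- Let (S,⊑) be a poset and R a binary relation on S satisfying: up-R (if x' ⊑ x and x'Ry' then xRy'), R-down (if xRy and y' ⊑ y then xRy'), and R-refinability (if xRy then ∃x' ⊑ x such that ∀x'' ⊑ x', ∃y' ⊑ y with x''Ry'). Then for every regular open set Z of (S,⊑), the set □Z = {x ∈ S : R(x) ⊆ Z} is regular open. -/
/-- If a relation `R` on a poset satisfies up-R, R-down, and R-refinability,
then `□Z = {x | R(x) ⊆ Z}` is regular open for every regular open `Z`. -/
theorem box_preserves_regular_open {S : Type*} [PartialOrder S]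
    (R : S → S → Prop)
    (hup : ∀ x x' y', x' ≤ x → R x' y' → R x y')
    (hdown : ∀ x y y', R x y → y' ≤ y → R x y')
    (href : ∀ x y, R x y → ∃ x' ≤ x, ∀ x'' ≤ x', ∃ y' ≤ y, R x'' y') :
    ∀ Z : Set S, IsRO Z → IsRO {x : S | ∀ y, R x y → y ∈ Z} := by
  intro Z hZ
  ext x
  simp only [Set.mem_setOf_eq]
  constructor
  · intro hx x' hx'
    exact ⟨x', le_refl x', fun y hy => hx y (hup x x' y hx' hy)⟩
  · intro hx y hxy
    rw [hZ]
    intro y' hy'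
    have hxy' : R x y' := hdown x y y' hxy hy'
    obtain ⟨x₁, hx₁, h₁⟩ := href x y' hxy'
    obtain ⟨x₂, hx₂, h₂⟩ := hx x₁ hx₁
    obtain ⟨y'', hy'', hR⟩ := h₁ x₂ hx₂
    exact ⟨y'', hy'', h₂ y'' hR⟩
end

section
/- Let (S,⊑) be a poset with neighborhood function N : S → ℘(RO(S,⊑)). Then the regular open sets are closed under the operation □_N U = {x ∈ S : U ∈ N(x)} (for all U ∈ RO(S,⊑)) if and only if N satisfies N-persistence (if x' ⊑ x then N(x) ⊆ N(x')) and N-refinability (if U ∉ N(x), then ∃x' ⊑ x such that ∀x'' ⊑ x', U ∉ N(x'')). -/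
/-- For a neighborhood function `N` on a poset whose values are sets of regular
open sets, the regular open sets are closed under
`□_N U = {x | U ∈ N x}` iff `N` satisfies N-persistence and N-refinability. -/
theorem neighborhood_box_closure_iff {S : Type*} [PartialOrder S]
    (N : S → Set (Set S)) (hN : ∀ x : S, ∀ U ∈ N x, IsRO U) :
    (∀ U : Set S, IsRO U → IsRO {x : S | U ∈ N x}) ↔
      ((∀ x x' : S, x' ≤ x → N x ⊆ N x') ∧
        (∀ (x : S) (U : Set S), IsRO U → U ∉ N x →
          ∃ x' ≤ x, ∀ x'' ≤ x', U ∉ N x'')) := by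
  constructor
  · intro hclo
    constructor
    · intro x x' hle U hU
      have hRO := hclo U (hN x U hU)
      have hx : x ∈ {x : S | U ∈ N x} := hU
      rw [hRO] at hx
      have hx' : x' ∈ {x : S | ∀ y ≤ x, ∃ z ≤ y, z ∈ {x : S | U ∈ N x}} := by
        intro y hy
        exact hx y (hy.trans hle)
      rw [← hRO] at hx'
      exact hx'
    · intro x U hURO hU
      have hRO := hclo U hURO
      by_contra h
      push_neg at h
      apply hU
      have : x ∈ {x : S | ∀ y ≤ x, ∃ z ≤ y, z ∈ {x : S | U ∈ N x}} := by
        intro y hy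
        obtain ⟨z, hz, hz'⟩ := h y hy
        exact ⟨z, hz, hz'⟩
      rw [← hRO] at this
      exact this
  · rintro ⟨hpers, href⟩ U hURO
    apply Set.eq_of_subset_of_subset
    · intro x hx y hy
      exact ⟨y, le_refl y, hpers x y hy hx⟩
    · intro x hx
      by_contra h
      obtain ⟨x', hx', hall⟩ := href x U hURO h
      obtain ⟨z, hz, hzU⟩ := hx x' hx'
      exact hall z hz hzU
end

section
/- Let (B, {□ᵢ}) be a complete Boolean algebra with operators □ᵢ distributing over all meets, and define on B₊ = B \ {0} the relations xRᵢy iff for all y' ≤₊ y, x ∧ ◇ᵢy' ≠ 0, where ◇ᵢa = ¬□ᵢ¬a. Then each Rᵢ satisfies up-R, R-down, R-refinability, and R-dense with respect to the order ≤₊ on B₊. -/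
/-- The relation `x R y` iff for all nonzero `y' ≤ y`, `x ⊓ ◇y' ≠ ⊥`, where
`◇a = ¬□¬a`, defined on the nonzero elements of a Boolean algebra. -/
def accRel {B : Type*} [BooleanAlgebra B] (box : B → B)
    (x y : {b : B // b ≠ ⊥}) : Prop :=
  ∀ y' : {b : B // b ≠ ⊥}, y' ≤ y → (x : B) ⊓ (box ((y' : B)ᶜ))ᶜ ≠ ⊥

/-- For a complete Boolean algebra with operators `□ᵢ` distributing over all
meets, the relations `Rᵢ` on the poset of nonzero elements satisfy up-R,
R-down, R-refinability, and R-dense. -/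
theorem accRel_conditions {B : Type*} [CompleteBooleanAlgebra B]
    {I : Type*} (box : I → B → B)
    (hbox : ∀ (i : I) (A : Set B), box i (sInf A) = ⨅ a ∈ A, box i a) :
    ∀ i : I,
      (∀ x x' y' : {b : B // b ≠ ⊥}, x' ≤ x → accRel (box i) x' y' → accRel (box i) x y') ∧
      (∀ x y y' : {b : B // b ≠ ⊥}, accRel (box i) x y → y' ≤ y → accRel (box i) x y') ∧
      (∀ x y : {b : B // b ≠ ⊥}, accRel (box i) x y →
        ∃ x' ≤ x, ∀ x'' ≤ x', ∃ y' ≤ y, accRel (box i) x'' y') ∧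
      (∀ x y : {b : B // b ≠ ⊥},
        (∀ y' ≤ y, ∃ y'' ≤ y', accRel (box i) x y'') → accRel (box i) x y) := by
  intro i
  have hmono : Monotone (box i) := by
    intro a b hab
    have h := hbox i {a, b}
    have hinf : sInf ({a, b} : Set B) = a := by
      rw [sInf_pair, inf_eq_left.mpr hab]
    rw [hinf] at h
    calc box i a = ⨅ c ∈ ({a, b} : Set B), box i c := h
      _ ≤ box i b := biInf_le _ (by simp)
  have hsd : ∀ a b : B, a ⊓ bᶜ = ⊥ ↔ a ≤ b := by
    intro a b; rw [← sdiff_eq, sdiff_eq_bot_iff]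
  refine ⟨?_, ?_, ?_, ?_⟩
  · -- up-R
    intro x x' y' hx hR y'' hy'' hbot
    exact hR y'' hy''
      (le_bot_iff.mp ((inf_le_inf_right _ (show (x' : B) ≤ x from hx)).trans hbot.le))
  · -- R-down
    intro x y y' hR hyy y'' hy''
    exact hR y'' (hy''.trans hyy)
  · -- R-refinability
    intro x y hR
    have hxy : (x : B) ⊓ (box i ((y : B)ᶜ))ᶜ ≠ ⊥ := hR y le_rfl
    refine ⟨⟨(x : B) ⊓ (box i ((y : B)ᶜ))ᶜ, hxy⟩, inf_le_left, ?_⟩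
    intro x'' hx''
    by_contra hcon
    push_neg at hcon
    set D : Set B := {z | z ≠ ⊥ ∧ z ≤ (y : B) ∧ (x'' : B) ⊓ (box i zᶜ)ᶜ = ⊥} with hD
    have hdense : ∀ z : B, z ≠ ⊥ → z ≤ (y : B) → ∃ w ∈ D, w ≤ z := by
      intro z hz hzy
      have h1 := hcon ⟨z, hz⟩ hzy
      unfold accRel at h1
      push_neg at h1
      obtain ⟨w, hwz, hw⟩ := h1
      exact ⟨(w : B), ⟨w.2, le_trans hwz hzy, hw⟩, hwz⟩
    have hys : (y : B) ≤ sSup D := by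
      by_contra hns
      have hne : (y : B) ⊓ (sSup D)ᶜ ≠ ⊥ := fun hb => hns ((hsd _ _).mp hb)
      obtain ⟨w, hwD, hwle⟩ := hdense _ hne inf_le_left
      have h1 : w ≤ sSup D := le_sSup hwD
      have h2 : w ≤ (sSup D)ᶜ := hwle.trans inf_le_right
      exact hwD.1 (le_bot_iff.mp ((le_inf h1 h2).trans inf_compl_eq_bot.le))
    have hle : (x'' : B) ≤ box i ((sSup D)ᶜ) := by
      have h1 : (x'' : B) ≤ ⨅ a ∈ (compl '' D), box i a := by
        refine le_iInf₂ ?_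
        rintro a ⟨z, hz, rfl⟩
        exact (hsd _ _).mp hz.2.2
      rw [← hbox i (compl '' D)] at h1
      have h2 : sInf (compl '' D) = (sSup D)ᶜ := by
        rw [sInf_image, compl_sSup]
      rwa [h2] at h1
    have h3 : (x'' : B) ≤ box i ((y : B)ᶜ) := hle.trans (hmono (compl_le_compl hys))
    have h4 : (x'' : B) ≤ (box i ((y : B)ᶜ))ᶜ :=
      (show (x'' : B) ≤ _ from hx'').trans inf_le_right
    exact x''.2 (le_bot_iff.mp ((le_inf h3 h4).trans inf_compl_eq_bot.le))
  · -- R-dense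
    intro x y h y' hy'
    obtain ⟨y'', hy'', hR⟩ := h y' hy'
    have h1 := hR y'' le_rfl
    have h2 : (box i ((y'' : B)ᶜ))ᶜ ≤ (box i ((y' : B)ᶜ))ᶜ :=
      compl_le_compl (hmono (compl_le_compl hy''))
    exact fun hbot => h1 (le_bot_iff.mp ((inf_le_inf_left _ h2).trans hbot.le))
end
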